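/- The monotone rearrangement transports one one-dimensional distribution to another: if μ is a Borel probability measure on ℝ whose cumulative distribution function F_μ is continuous (equivalently, μ has no atoms), and ν is any Borel probability measure on ℝ with quantile function F_ν⁻¹(z) = inf{x ∈ ℝ : F_ν(x) ≥ z}, then the pushforward of μ under the (non-decreasing) map x ↦ F_ν⁻¹(F_μ(x)) equals ν. -/

import Mathlib

open MeasureTheory

/-- The quantile function (generalized inverse of the cumulative distribution function
`F_ν(x) = ν((-∞, x])`) of a measure `ν` on `ℝ`. -/
noncomputable def quantile (ν : Measure ℝ) (z : ℝ) : ℝ :=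
  sInf {x : ℝ | z ≤ (ν (Set.Iic x)).toReal}

open ProbabilityTheory Set Filter Topology

section aux
variable (ν : Measure ℝ) [IsProbabilityMeasure ν]

lemma Fdef (x : ℝ) : (ν (Set.Iic x)).toReal = cdf ν x := by rw [cdf_eq_real]; rfl

lemma bddBelow_S {z : ℝ} (hz : 0 < z) : BddBelow {x : ℝ | z ≤ (ν (Set.Iic x)).toReal} := by
  obtain ⟨b, hb⟩ := ((tendsto_cdf_atBot ν).eventually_lt_const hz).exists
  refine ⟨b, fun x hx => ?_⟩
  by_contra hbx
  push_neg at hbx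
  have : cdf ν x ≤ cdf ν b := (cdf ν).mono hbx.le
  rw [Set.mem_setOf_eq, Fdef] at hx
  linarith

lemma quantile_le {z a : ℝ} (hz : 0 < z) (h : z ≤ (ν (Set.Iic a)).toReal) :
    quantile ν z ≤ a :=
  csInf_le (bddBelow_S ν hz) h

lemma le_cdf_quantile {z : ℝ} (hz : 0 < z) (hz1 : z < 1) :
    z ≤ (ν (Set.Iic (quantile ν z))).toReal := by
  have hne : {x : ℝ | z ≤ (ν (Set.Iic x)).toReal}.Nonempty := by
    obtain ⟨b, hb⟩ := ((tendsto_cdf_atTop ν).eventually_const_lt hz1).exists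
    exact ⟨b, by rw [Set.mem_setOf_eq, Fdef]; exact hb.le⟩
  set c := quantile ν z with hc
  have hrc : Filter.Tendsto (cdf ν) (nhdsWithin c (Set.Ioi c)) (nhds (cdf ν c)) :=
    ((cdf ν).right_continuous c).mono_left (nhdsWithin_mono c Set.Ioi_subset_Ici_self)
  rw [Fdef]
  refine ge_of_tendsto hrc ?_
  filter_upwards [self_mem_nhdsWithin] with y hy
  obtain ⟨x, hxS, hxy⟩ := exists_lt_of_csInf_lt hne hy
  rw [Set.mem_setOf_eq, Fdef] at hxS
  exact hxS.trans ((cdf ν).mono hxy.le)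

lemma quantile_le_iff {z a : ℝ} (hz : 0 < z) (hz1 : z < 1) :
    quantile ν z ≤ a ↔ z ≤ (ν (Set.Iic a)).toReal := by
  constructor
  · intro h
    refine (le_cdf_quantile ν hz hz1).trans ?_
    rw [Fdef, Fdef]
    exact (cdf ν).mono h
  · exact quantile_le ν hz

end aux

section aux2
variable (μ : Measure ℝ) [IsProbabilityMeasure μ]
  (hcont : Continuous fun x : ℝ => (μ (Set.Iic x)).toReal)

include hcont in
lemma level_measure {t : ℝ} (ht0 : 0 ≤ t) (ht1 : t ≤ 1) :
    μ {x : ℝ | (μ (Set.Iic x)).toReal ≤ t} = ENNReal.ofReal t := by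
  rcases eq_or_lt_of_le ht1 with ht1 | ht1
  · subst ht1
    have : {x : ℝ | (μ (Set.Iic x)).toReal ≤ 1} = Set.univ := by
      ext x
      simp only [Set.mem_setOf_eq, Set.mem_univ, iff_true, Fdef]
      exact cdf_le_one μ x
    rw [this, measure_univ]
    simp
  rcases Set.eq_empty_or_nonempty {x : ℝ | (μ (Set.Iic x)).toReal ≤ t} with he | hne
  · rw [he, measure_empty]
    -- show t = 0
    rcases eq_or_lt_of_le ht0 with ht0 | ht0
    · rw [← ht0]; simp
    · obtain ⟨b, hb⟩ := ((tendsto_cdf_atBot μ).eventually_lt_const ht0).exists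
      exact absurd (Set.eq_empty_iff_forall_notMem.mp he b)
        (by simp only [Set.mem_setOf_eq, not_not, Fdef]; exact hb.le)
  · have hbdd : BddAbove {x : ℝ | (μ (Set.Iic x)).toReal ≤ t} := by
      obtain ⟨u, hu⟩ := ((tendsto_cdf_atTop μ).eventually_const_lt ht1).exists
      refine ⟨u, fun x hx => ?_⟩
      by_contra hux
      push_neg at hux
      rw [Set.mem_setOf_eq, Fdef] at hx
      have := (cdf μ).mono hux.le
      linarith
    have hclosed : IsClosed {x : ℝ | (μ (Set.Iic x)).toReal ≤ t} :=
      isClosed_le hcont continuous_const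
    set c := sSup {x : ℝ | (μ (Set.Iic x)).toReal ≤ t} with hc
    have hcmem : c ∈ {x : ℝ | (μ (Set.Iic x)).toReal ≤ t} := hclosed.csSup_mem hne hbdd
    have hFc : (μ (Set.Iic c)).toReal = t := by
      refine le_antisymm hcmem ?_
      by_contra hlt
      push_neg at hlt
      have hopen : IsOpen {x : ℝ | (μ (Set.Iic x)).toReal < t} :=
        isOpen_lt hcont continuous_const
      obtain ⟨ε, hε, hball⟩ := Metric.isOpen_iff.mp hopen c hlt
      have hmem : c + ε / 2 ∈ Metric.ball c ε := by
        rw [Metric.mem_ball, Real.dist_eq]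
        rw [show c + ε / 2 - c = ε / 2 by ring, abs_of_nonneg (by linarith)]
        linarith
      have hlt2 : (μ (Set.Iic (c + ε / 2))).toReal < t := hball hmem
      have : c + ε / 2 ∈ {x : ℝ | (μ (Set.Iic x)).toReal ≤ t} := hlt2.le
      have := le_csSup hbdd this
      linarith
    have hset : {x : ℝ | (μ (Set.Iic x)).toReal ≤ t} = Set.Iic c := by
      apply Set.Subset.antisymm
      · exact fun x hx => le_csSup hbdd hx
      · intro x hx
        rw [Set.mem_setOf_eq, Fdef, ← hFc, Fdef]
        exact (cdf μ).mono hx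
    rw [hset, ← hFc, ENNReal.ofReal_toReal (measure_ne_top μ _)]

include hcont in
lemma top_level_null : μ {x : ℝ | (μ (Set.Iic x)).toReal = 1} = 0 := by
  have key : ∀ n : ℕ, μ {x : ℝ | (μ (Set.Iic x)).toReal = 1}
      ≤ ENNReal.ofReal (1 / (n + 1)) := by
    intro n
    have hn : (0:ℝ) ≤ n := Nat.cast_nonneg n
    have h1 : (0:ℝ) < 1 / (n + 1) := by positivity
    have h2 : (1:ℝ) / (n + 1) ≤ 1 := by
      rw [div_le_one (by positivity)]; linarith
    have hsub : {x : ℝ | (μ (Set.Iic x)).toReal = 1}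
        ⊆ {x : ℝ | (μ (Set.Iic x)).toReal ≤ 1 - 1 / (n + 1)}ᶜ := by
      intro x hx
      simp only [Set.mem_compl_iff, Set.mem_setOf_eq] at hx ⊢
      rw [hx]; linarith
    refine (measure_mono hsub).trans ?_
    have hms : MeasurableSet {x : ℝ | (μ (Set.Iic x)).toReal ≤ 1 - 1 / (n + 1)} :=
      (isClosed_le hcont continuous_const).measurableSet
    rw [measure_compl hms (measure_ne_top μ _),
      level_measure μ hcont (by linarith) (by linarith), measure_univ]
    rw [← ENNReal.ofReal_one, ← ENNReal.ofReal_sub _ (by linarith)]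
    apply le_of_eq
    congr 1
    ring
  have htend : Filter.Tendsto (fun n : ℕ => ENNReal.ofReal (1 / (n + 1))) atTop (nhds 0) := by
    have h0 : Filter.Tendsto (fun n : ℕ => (1:ℝ) / (n + 1)) atTop (nhds 0) :=
      tendsto_one_div_add_atTop_nhds_zero_nat
    simpa using (ENNReal.tendsto_ofReal h0)
  exact le_antisymm (ge_of_tendsto' htend key) zero_le

end aux2

section main
variable (μ ν : Measure ℝ) [IsProbabilityMeasure μ] [IsProbabilityMeasure ν]
  (hcont : Continuous fun x : ℝ => (μ (Set.Iic x)).toReal)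

include hcont in
lemma bot_level_null : μ {x : ℝ | (μ (Set.Iic x)).toReal = 0} = 0 := by
  have : {x : ℝ | (μ (Set.Iic x)).toReal = 0} = {x : ℝ | (μ (Set.Iic x)).toReal ≤ 0} := by
    ext x
    simp only [Set.mem_setOf_eq]
    constructor
    · exact le_of_eq
    · intro h
      refine le_antisymm h ?_
      rw [Fdef]; exact cdf_nonneg μ x
  rw [this, level_measure μ hcont le_rfl zero_le_one]
  simp

include hcont in
lemma h_measurable : Measurable (fun x : ℝ => quantile ν ((μ (Set.Iic x)).toReal)) := by
  apply measurable_of_Iic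
  intro a
  have hF0 : ∀ x : ℝ, 0 ≤ (μ (Set.Iic x)).toReal := fun x => ENNReal.toReal_nonneg
  have hF1 : ∀ x : ℝ, (μ (Set.Iic x)).toReal ≤ 1 := fun x => by
    rw [Fdef]; exact cdf_le_one μ x
  have hdecomp : (fun x : ℝ => quantile ν ((μ (Set.Iic x)).toReal)) ⁻¹' Set.Iic a =
      (({x : ℝ | 0 < (μ (Set.Iic x)).toReal ∧ (μ (Set.Iic x)).toReal < 1}
        ∩ {x : ℝ | (μ (Set.Iic x)).toReal ≤ (ν (Set.Iic a)).toReal})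
      ∪ ({x : ℝ | (μ (Set.Iic x)).toReal = 0} ∩ {_x : ℝ | quantile ν 0 ≤ a}))
      ∪ ({x : ℝ | (μ (Set.Iic x)).toReal = 1} ∩ {_x : ℝ | quantile ν 1 ≤ a}) := by
    ext x
    simp only [Set.mem_preimage, Set.mem_Iic, Set.mem_union, Set.mem_inter_iff,
      Set.mem_setOf_eq]
    constructor
    · intro h
      rcases eq_or_lt_of_le (hF0 x) with h0 | h0
      · exact Or.inl (Or.inr ⟨h0.symm, by rwa [← h0] at h⟩)
      · rcases eq_or_lt_of_le (hF1 x) with h1 | h1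
        · exact Or.inr ⟨h1, by rwa [h1] at h⟩
        · exact Or.inl (Or.inl ⟨⟨h0, h1⟩, (quantile_le_iff ν h0 h1).mp h⟩)
    · rintro ((⟨⟨h0, h1⟩, hle⟩ | ⟨h0, hle⟩) | ⟨h1, hle⟩)
      · exact (quantile_le_iff ν h0 h1).mpr hle
      · rwa [h0]
      · rwa [h1]
  rw [hdecomp]
  have hmF : Measurable (fun x : ℝ => (μ (Set.Iic x)).toReal) := hcont.measurable
  refine MeasurableSet.union (MeasurableSet.union ?_ ?_) ?_
  · exact ((hmF measurableSet_Ioo (t := Set.Ioo 0 1)).inter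
      (hmF measurableSet_Iic (t := Set.Iic _)))
  · exact (hmF (measurableSet_singleton 0)).inter (MeasurableSet.const _)
  · exact (hmF (measurableSet_singleton 1)).inter (MeasurableSet.const _)

include hcont in
theorem monotone_rearrangement_map_aux :
    μ.map (fun x : ℝ => quantile ν ((μ (Set.Iic x)).toReal)) = ν := by
  have hh := h_measurable μ ν hcont
  haveI : IsProbabilityMeasure
      (μ.map (fun x : ℝ => quantile ν ((μ (Set.Iic x)).toReal))) :=
    Measure.isProbabilityMeasure_map hh.aemeasurable
  refine Measure.ext_of_Iic _ ν fun a => ?_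
  rw [Measure.map_apply hh measurableSet_Iic]
  have hN : μ ({x : ℝ | (μ (Set.Iic x)).toReal = 0}
      ∪ {x : ℝ | (μ (Set.Iic x)).toReal = 1}) = 0 :=
    measure_union_null (bot_level_null μ hcont) (top_level_null μ hcont)
  have hae : ((fun x : ℝ => quantile ν ((μ (Set.Iic x)).toReal)) ⁻¹' Set.Iic a)
      =ᵐ[μ] {x : ℝ | (μ (Set.Iic x)).toReal ≤ (ν (Set.Iic a)).toReal} := by
    rw [Filter.eventuallyEq_set]
    filter_upwards [measure_eq_zero_iff_ae_notMem.mp hN] with x hx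
    simp only [Set.mem_union, Set.mem_setOf_eq, not_or] at hx
    have h0 : 0 < (μ (Set.Iic x)).toReal :=
      lt_of_le_of_ne ENNReal.toReal_nonneg (Ne.symm hx.1)
    have h1 : (μ (Set.Iic x)).toReal < 1 :=
      lt_of_le_of_ne (by rw [Fdef]; exact cdf_le_one μ x) hx.2
    simp only [Set.mem_preimage, Set.mem_Iic, Set.mem_setOf_eq]
    exact quantile_le_iff ν h0 h1
  rw [measure_congr hae, level_measure μ hcont ENNReal.toReal_nonneg
    (by rw [Fdef]; exact cdf_le_one ν a), ENNReal.ofReal_toReal (measure_ne_top ν _)]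

end main

/-- The monotone rearrangement transports one one-dimensional distribution to another: if the
cumulative distribution function of `μ` is continuous, then the pushforward of `μ` under
`x ↦ F_ν⁻¹(F_μ(x))` equals `ν`. -/
theorem monotone_rearrangement_map
    (μ ν : Measure ℝ) [IsProbabilityMeasure μ] [IsProbabilityMeasure ν]
    (hcont : Continuous fun x : ℝ => (μ (Set.Iic x)).toReal) :
    μ.map (fun x : ℝ => quantile ν ((μ (Set.Iic x)).toReal)) = ν :=
  monotone_rearrangement_map_aux μ ν hcont
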